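/- arXiv:1608.06033 — 2 statements merged into one kernel-verified Lean document; each statement's English description precedes it below -/
import Mathlib

section
/- Let f(n) = ⌊(2n+1)/3⌋, and define f^(0)(n) = n, f^(i+1)(n) = f(f^(i)(n)). Then for any integer ℓ ≥ log_{3/2} n and any integer n ≥ 1, f^(ℓ)(n) = 1. -/
theorem stmt_0 (f : ℕ → ℕ) (hf : ∀ n, f n = (2 * n + 1) / 3)
    (n : ℕ) (hn : 1 ≤ n) (ℓ : ℕ) (hℓ : Real.logb (3/2) n ≤ ℓ) :
    f^[ℓ] n = 1 := by
  -- basic facts about f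
  have hfb : ∀ m : ℕ, 1 ≤ m → 1 ≤ f m ∧ 3 * f m ≤ 2 * m + 1 := by
    intro m hm
    have h1 : (2 * m + 1) / 3 * 3 ≤ 2 * m + 1 := Nat.div_mul_le_self _ 3
    have h2 : 1 ≤ (2 * m + 1) / 3 := (Nat.le_div_iff_mul_le (by norm_num)).mpr (by omega)
    rw [hf]
    omega
  -- key induction
  have key : ∀ k : ℕ, 1 ≤ f^[k] n ∧ 3^k * (f^[k] n - 1) ≤ 2^k * (n - 1) := by
    intro k
    induction k with
    | zero => simpa using hn
    | succ k ih =>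
      obtain ⟨h1, h2⟩ := ih
      set a := f^[k] n with ha
      have hstep : f^[k+1] n = f a := by rw [Function.iterate_succ_apply']
      obtain ⟨hb1, hb2⟩ := hfb a h1
      refine ⟨by rw [hstep]; exact hb1, ?_⟩
      rw [hstep]
      have h3 : 3 * (f a - 1) ≤ 2 * (a - 1) := by omega
      calc 3^(k+1) * (f a - 1) = 3^k * (3 * (f a - 1)) := by ring
        _ ≤ 3^k * (2 * (a - 1)) := Nat.mul_le_mul_left _ h3
        _ = 2 * (3^k * (a - 1)) := by ring
        _ ≤ 2 * (2^k * (n - 1)) := Nat.mul_le_mul_left _ h2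
        _ = 2^(k+1) * (n - 1) := by ring
  -- convert the real hypothesis
  have hreal : (n : ℝ) ≤ (3/2 : ℝ) ^ ℓ := by
    have := (Real.logb_le_iff_le_rpow (by norm_num) (by exact_mod_cast hn)).mp hℓ
    rwa [Real.rpow_natCast] at this
  have hnat : n * 2^ℓ ≤ 3^ℓ := by
    have h2 : (0:ℝ) < (2:ℝ)^ℓ := by positivity
    have : (n : ℝ) * 2^ℓ ≤ 3^ℓ := by
      rw [div_pow] at hreal
      calc (n:ℝ) * 2^ℓ ≤ (3^ℓ / 2^ℓ) * 2^ℓ := by nlinarith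
        _ = 3^ℓ := by field_simp
    exact_mod_cast this
  obtain ⟨h1, h2⟩ := key ℓ
  have hp2 : 0 < (2:ℕ)^ℓ := Nat.pow_pos (by norm_num)
  have hcomm : n * 2^ℓ = 2^ℓ * n := Nat.mul_comm _ _
  have hlt : 2^ℓ * (n - 1) < 3^ℓ := by
    have h2n : 2^ℓ * (n-1) = 2^ℓ * n - 2^ℓ := by
      rw [Nat.mul_sub_one]
    have h2ln : 2^ℓ ≤ 2^ℓ * n := Nat.le_mul_of_pos_right _ hn
    omega
  have hz : f^[ℓ] n - 1 = 0 := by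
    by_contra h
    have hpos : 0 < f^[ℓ] n - 1 := Nat.pos_of_ne_zero h
    have : 3^ℓ ≤ 3^ℓ * (f^[ℓ] n - 1) := Nat.le_mul_of_pos_right _ hpos
    omega
  omega
end

section
/- Starting from k = n competitors and repeatedly applying ℓ = ⌊log_{3/2} n⌋ + 1 sifters with bound f(k) = ⌊(2k+1)/3⌋, at most one winner remains; i.e., f^(⌊log_{3/2} n⌋ + 1)(n) = 1 for every n ≥ 1. -/
theorem stmt_18 (f : ℕ → ℕ) (hf : ∀ k, f k = (2 * k + 1) / 3)
    (n : ℕ) (hn : 1 ≤ n) :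
    f^[⌊Real.logb (3/2) n⌋₊ + 1] n = 1 := by
  have hpos : ∀ m, 1 ≤ f^[m] n := by
    intro m
    induction m with
    | zero => simpa using hn
    | succ m ih =>
      rw [Function.iterate_succ_apply', hf]
      omega
  have hbound : ∀ m, 3 ^ m * (f^[m] n - 1) ≤ 2 ^ m * (n - 1) := by
    intro m
    induction m with
    | zero => simp
    | succ m ih =>
      rw [Function.iterate_succ_apply', hf]
      have h1 : 3 * ((2 * f^[m] n + 1) / 3) ≤ 2 * f^[m] n + 1 :=
        Nat.mul_div_le _ _
      have h2 : 3 * ((2 * f^[m] n + 1) / 3 - 1) ≤ 2 * (f^[m] n - 1) := by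
        have := hpos m; omega
      calc 3 ^ (m + 1) * ((2 * f^[m] n + 1) / 3 - 1)
          = 3 ^ m * (3 * ((2 * f^[m] n + 1) / 3 - 1)) := by ring
        _ ≤ 3 ^ m * (2 * (f^[m] n - 1)) := Nat.mul_le_mul_left _ h2
        _ = 2 * (3 ^ m * (f^[m] n - 1)) := by ring
        _ ≤ 2 * (2 ^ m * (n - 1)) := Nat.mul_le_mul_left _ ih
        _ = 2 ^ (m + 1) * (n - 1) := by ring
  set m := ⌊Real.logb (3/2) n⌋₊ + 1 with hm
  have hlog : Real.logb (3/2) n < (m : ℝ) := by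
    have h0 : 0 ≤ Real.logb (3/2) n := by
      apply Real.logb_nonneg (by norm_num)
      exact_mod_cast hn
    have := Nat.lt_floor_add_one (Real.logb (3/2) n)
    push_cast [hm]
    linarith
  have hn' : (n : ℝ) < (3/2 : ℝ) ^ m := by
    have h1 : (0 : ℝ) < n := by exact_mod_cast hn
    have := (Real.logb_lt_iff_lt_rpow (by norm_num : (1:ℝ) < 3/2) h1).mp hlog
    rwa [Real.rpow_natCast] at this
  have hkey : 2 ^ m * (n - 1) < 3 ^ m := by
    have : ((2 ^ m * (n - 1) : ℕ) : ℝ) < ((3 ^ m : ℕ) : ℝ) := by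
      push_cast [Nat.cast_sub hn]
      have h2 : (0:ℝ) < 2 ^ m := by positivity
      have : (2:ℝ) ^ m * ((n:ℝ) - 1) < 2 ^ m * (3/2) ^ m := by
        apply mul_lt_mul_of_pos_left _ h2
        linarith
      calc (2:ℝ) ^ m * ((n:ℝ) - 1) < 2 ^ m * (3/2) ^ m := this
        _ = 3 ^ m := by rw [← mul_pow]; norm_num
    exact_mod_cast this
  have := lt_of_le_of_lt (hbound m) hkey
  have h3 : f^[m] n - 1 < 1 :=
    Nat.lt_of_mul_lt_mul_left (a := 3 ^ m) (by simpa using this)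
  have := hpos m
  omega
end
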